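/- Let S ⊆ ℝ^d be compact, P a Borel probability measure on S, and π₀ a Borel probability measure on S × S with first marginal P. Let F : S × S → ℝ be continuous and ε > 0. Then the infimum over continuous functions g : S → ℝ of E_{x∼P}[g(x)] + ε · E_{(x,y)∼π₀}[ exp((F(x,y) − g(x))/ε) − 1 ] is attained at g*(x) := ε log( ∫_S exp(F(x,y)/ε) π₀(dy|x) ), and the optimal value equals ε · E_{x∼P}[ log( E_{y∼π₀(·|x)} exp(F(x,y)/ε) ) ]. -/

import Mathlib

open MeasureTheory Filter
open ProbabilityTheory

private lemma exp_sub_exp_le {a b c : ℝ} (ha : a ≤ c) (hb : b ≤ c) :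
    |Real.exp a - Real.exp b| ≤ Real.exp c * |a - b| := by
  have key : ∀ s t : ℝ, t ≤ s → s ≤ c → Real.exp s - Real.exp t ≤ Real.exp c * (s - t) := by
    intro s t hts hsc
    have h1 : (t - s) + 1 ≤ Real.exp (t - s) := Real.add_one_le_exp _
    have h2 : Real.exp (t - s) = Real.exp t / Real.exp s := by rw [Real.exp_sub]
    have hs : Real.exp s ≤ Real.exp c := Real.exp_le_exp.2 hsc
    have hspos : 0 < Real.exp s := Real.exp_pos s
    rw [h2] at h1
    have h3 : (t - s + 1) * Real.exp s ≤ Real.exp t := (le_div_iff₀ hspos).mp h1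
    nlinarith
  rcases le_total b a with h | h
  · rw [abs_of_nonneg (by linarith [Real.exp_le_exp.2 h] : (0:ℝ) ≤ Real.exp a - Real.exp b),
      abs_of_nonneg (by linarith : (0:ℝ) ≤ a - b)]
    exact key a b h ha
  · rw [abs_of_nonpos (by linarith [Real.exp_le_exp.2 h] : Real.exp a - Real.exp b ≤ 0),
      abs_of_nonpos (by linarith : a - b ≤ 0)]
    have := key b a h hb
    linarith

private lemma clamp_lip (M a b : ℝ) :
    |max (-M) (min M a) - max (-M) (min M b)| ≤ |a - b| := by
  have h := abs_min_sub_min_le_max M a M b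
  rw [sub_self, abs_zero, max_eq_right (abs_nonneg (a-b))] at h
  rw [max_comm (-M) (min M a), max_comm (-M) (min M b)]
  exact (abs_max_sub_max_le_abs (min M a) (min M b) (-M)).trans h

private lemma clamp_eq {M a : ℝ} (h : |a| ≤ M) : max (-M) (min M a) = a := by
  rw [abs_le] at h
  rw [min_eq_right h.2, max_eq_right h.1]

private lemma clamp_abs_le {M a : ℝ} (hM : 0 ≤ M) : |max (-M) (min M a)| ≤ M := by
  rw [abs_le]
  constructor
  · exact le_max_left _ _
  · exact max_le (by linarith) (min_le_left _ _)


/-- The regularized dual functional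
`J(g) = E_P[g] + ε E_{π₀}[exp((F − g ∘ fst)/ε) − 1]`. -/
noncomputable def entFunctional {d : ℕ}
    (P : Measure (EuclideanSpace ℝ (Fin d)))
    (π₀ : Measure (EuclideanSpace ℝ (Fin d) × EuclideanSpace ℝ (Fin d)))
    (F : EuclideanSpace ℝ (Fin d) × EuclideanSpace ℝ (Fin d) → ℝ) (ε : ℝ)
    (g : EuclideanSpace ℝ (Fin d) → ℝ) : ℝ :=
  (∫ x, g x ∂P) + ε * ∫ z, (Real.exp ((F z - g z.1) / ε) - 1) ∂π₀

/-- The explicit log-sum-exp minimizer `g*(x) = ε log ∫ exp(F(x,y)/ε) π₀(dy|x)`. -/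
noncomputable def entMinimizer {d : ℕ}
    (π₀ : Measure (EuclideanSpace ℝ (Fin d) × EuclideanSpace ℝ (Fin d)))
    [IsFiniteMeasure π₀]
    (F : EuclideanSpace ℝ (Fin d) × EuclideanSpace ℝ (Fin d) → ℝ) (ε : ℝ)
    (x : EuclideanSpace ℝ (Fin d)) : ℝ :=
  ε * Real.log (∫ y, Real.exp (F (x, y) / ε) ∂(π₀.condKernel x))

set_option maxHeartbeats 2000000 in
/-- The infimum of `g ↦ E_P[g] + ε E_{π₀}[e^{(F−g)/ε} − 1]` over continuous functions is
attained at `g*(x) = ε log ∫ e^{F(x,y)/ε} π₀(dy|x)`, with optimal value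
`ε E_{x∼P}[log E_{y∼π₀(·|x)} e^{F(x,y)/ε}]`. -/
theorem stmt_6 {d : ℕ} (S : Set (EuclideanSpace ℝ (Fin d))) (hS : IsCompact S)
    (P : Measure (EuclideanSpace ℝ (Fin d))) [IsProbabilityMeasure P] (hP : P S = 1)
    (π₀ : Measure (EuclideanSpace ℝ (Fin d) × EuclideanSpace ℝ (Fin d)))
    [IsProbabilityMeasure π₀] (hπ₀S : π₀ (S ×ˢ S) = 1) (hπ₀fst : π₀.fst = P)
    (F : EuclideanSpace ℝ (Fin d) × EuclideanSpace ℝ (Fin d) → ℝ)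
    (hF : ContinuousOn F (S ×ˢ S)) (ε : ℝ) (hε : 0 < ε) :
    entFunctional P π₀ F ε (entMinimizer π₀ F ε)
        = ε * ∫ x, Real.log (∫ y, Real.exp (F (x, y) / ε) ∂(π₀.condKernel x)) ∂P ∧
    sInf {r : ℝ | ∃ g : EuclideanSpace ℝ (Fin d) → ℝ, ContinuousOn g S ∧
          r = entFunctional P π₀ F ε g}
      = entFunctional P π₀ F ε (entMinimizer π₀ F ε) := by
  classical
  set ν := π₀.condKernel with hν_def
  set I : EuclideanSpace ℝ (Fin d) → ℝ := fun x => ∫ y, Real.exp (F (x, y) / ε) ∂(ν x) with hI_def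
  set gs : EuclideanSpace ℝ (Fin d) → ℝ := entMinimizer π₀ F ε with hgs_def
  have hgs_eq : ∀ x, gs x = ε * Real.log (I x) := fun x => rfl
  have hSm : MeasurableSet S := hS.isClosed.measurableSet
  have hSSm : MeasurableSet (S ×ˢ S) := hSm.prod hSm
  -- bound on F
  obtain ⟨M₀, hM₀⟩ := (hS.prod hS).exists_bound_of_continuousOn hF
  set M := max M₀ 0 with hM_def
  have hM0 : 0 ≤ M := le_max_right _ _
  have hMF : ∀ z ∈ S ×ˢ S, |F z| ≤ M := fun z hz => (hM₀ z hz).trans (le_max_left _ _)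
  -- a.e. membership
  have hmemπ : ∀ᵐ z ∂π₀, z ∈ S ×ˢ S := by
    have h0 : π₀ (S ×ˢ S)ᶜ = 0 := by
      rw [measure_compl hSSm (measure_ne_top _ _), hπ₀S, measure_univ, tsub_self]
    rw [ae_iff]
    exact h0
  have hmemP : ∀ᵐ x ∂P, x ∈ S := by
    have h0 : P Sᶜ = 0 := by
      rw [measure_compl hSm (measure_ne_top _ _), hP, measure_univ, tsub_self]
    rw [ae_iff]
    exact h0
  -- disintegration
  have hdis : P ⊗ₘ ν = π₀ := by rw [hν_def, ← hπ₀fst]; exact π₀.disintegrate π₀.condKernel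
  have hmap : π₀.map Prod.fst = P := hπ₀fst
  have hae_fib : ∀ {p : EuclideanSpace ℝ (Fin d) × EuclideanSpace ℝ (Fin d) → Prop}, (∀ᵐ z ∂π₀, p z) → ∀ᵐ x ∂P, ∀ᵐ y ∂(ν x), p (x, y) := by
    intro p hp
    exact Measure.ae_ae_of_ae_compProd (by rwa [hdis])
  have hmem2 : ∀ᵐ x ∂P, ∀ᵐ y ∂(ν x), (x, y) ∈ S ×ˢ S := hae_fib hmemπ
  -- measurable version of F
  have hFae : AEStronglyMeasurable F π₀ := by
    have h1 : AEMeasurable F (π₀.restrict (S ×ˢ S)) := hF.aemeasurable hSSm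
    rwa [Measure.restrict_eq_self_of_ae_mem hmemπ, aestronglyMeasurable_iff_aemeasurable] at *
  set F₀ := hFae.mk F with hF₀_def
  have hF₀m : StronglyMeasurable F₀ := hFae.stronglyMeasurable_mk
  have hFF₀ : ∀ᵐ x ∂P, ∀ᵐ y ∂(ν x), F (x, y) = F₀ (x, y) := hae_fib hFae.ae_eq_mk
  -- measurability of I and gs
  set I₀ : EuclideanSpace ℝ (Fin d) → ℝ := fun x => ∫ y, Real.exp (F₀ (x, y) / ε) ∂(ν x) with hI₀_def
  have hI₀m : StronglyMeasurable I₀ := by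
    rw [hI₀_def]
    exact (Real.measurable_exp.comp
      (hF₀m.measurable.div_const ε)).stronglyMeasurable.integral_kernel_prod_right'
  have hII₀ : ∀ᵐ x ∂P, I x = I₀ x := by
    filter_upwards [hFF₀] with x hx
    exact integral_congr_ae (hx.mono fun y hy => by simp only [hy])
  have hgsm : AEStronglyMeasurable gs P := by
    refine (((Real.measurable_log.comp hI₀m.measurable).const_mul ε).aestronglyMeasurable).congr ?_
    filter_upwards [hII₀] with x hx
    simp only [hgs_eq x, hx, Function.comp]
  -- fiberwise integrability and bounds
  have hfib : ∀ᵐ x ∂P, Integrable (fun y => Real.exp (F (x, y) / ε)) (ν x) ∧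
      Real.exp (-(M/ε)) ≤ I x ∧ I x ≤ Real.exp (M/ε) := by
    filter_upwards [hmem2, hFF₀] with x hxy hxF
    have hb : ∀ᵐ y ∂(ν x), Real.exp (-(M/ε)) ≤ Real.exp (F (x, y) / ε) ∧
        Real.exp (F (x, y) / ε) ≤ Real.exp (M/ε) := by
      filter_upwards [hxy] with y hy
      have hFb := hMF _ hy
      rw [abs_le] at hFb
      constructor
      · apply Real.exp_le_exp.2
        rw [← neg_div]
        exact (div_le_div_iff_of_pos_right hε).2 hFb.1
      · exact Real.exp_le_exp.2 ((div_le_div_iff_of_pos_right hε).2 hFb.2)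
    have hm0 : Measurable (fun y => Real.exp (F₀ (x, y) / ε)) :=
      ((hF₀m.measurable.comp measurable_prodMk_left).div_const ε).exp
    have hm : AEStronglyMeasurable (fun y => Real.exp (F (x, y) / ε)) (ν x) := by
      refine hm0.aestronglyMeasurable.congr ?_
      filter_upwards [hxF] with y hy
      simp only [hy]
    have hint : Integrable (fun y => Real.exp (F (x, y) / ε)) (ν x) := by
      refine Integrable.mono' (integrable_const (Real.exp (M/ε))) hm ?_
      filter_upwards [hb] with y hy
      rw [Real.norm_eq_abs, abs_of_pos (Real.exp_pos _)]
      exact hy.2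
    refine ⟨hint, ?_, ?_⟩
    · calc Real.exp (-(M/ε)) = ∫ _, Real.exp (-(M/ε)) ∂(ν x) := by simp
      _ ≤ I x := integral_mono_ae (integrable_const _) hint (hb.mono fun y hy => hy.1)
    · calc I x ≤ ∫ _, Real.exp (M/ε) ∂(ν x) :=
        integral_mono_ae hint (integrable_const _) (hb.mono fun y hy => hy.2)
      _ = Real.exp (M/ε) := by simp
  have hgb : ∀ᵐ x ∂P, |gs x| ≤ M := by
    filter_upwards [hfib] with x ⟨_, hlo, hhi⟩
    have hIpos : 0 < I x := lt_of_lt_of_le (Real.exp_pos _) hlo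
    have h1 : Real.log (I x) ≤ M/ε := (Real.log_le_iff_le_exp hIpos).2 hhi
    have h2 : -(M/ε) ≤ Real.log (I x) := by
      rw [← Real.log_exp (-(M/ε))]
      exact Real.log_le_log (Real.exp_pos _) hlo
    rw [hgs_eq x, abs_mul, abs_of_pos hε]
    calc ε * |Real.log (I x)| ≤ ε * (M/ε) := by
          apply mul_le_mul_of_nonneg_left _ hε.le
          rw [abs_le]; exact ⟨h2, h1⟩
      _ = M := by field_simp

  -- key fiberwise identity
  have hfibzero : ∀ᵐ x ∂P, ∫ y, (Real.exp ((F (x, y) - gs x) / ε) - 1) ∂(ν x) = 0 := by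
    filter_upwards [hfib] with x ⟨hint, hlo, _⟩
    have hIpos : 0 < I x := lt_of_lt_of_le (Real.exp_pos _) hlo
    have hrw : ∀ y, Real.exp ((F (x, y) - gs x) / ε)
        = Real.exp (F (x, y) / ε) * Real.exp (-(gs x) / ε) := by
      intro y
      rw [← Real.exp_add]
      congr 1
      ring
    have hexp : Real.exp (-(gs x) / ε) = (I x)⁻¹ := by
      rw [hgs_eq]
      rw [show -(ε * Real.log (I x)) / ε = -Real.log (I x) by field_simp [mul_comm]]
      rw [Real.exp_neg, Real.exp_log hIpos]
    simp_rw [hrw]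
    rw [integral_sub (hint.mul_const _) (integrable_const 1), integral_mul_const,
      integral_const, hexp]
    simp [mul_inv_cancel₀ (ne_of_gt hIpos)]
    exact sub_eq_zero.2 (mul_inv_cancel₀ (ne_of_gt hIpos))

  -- transfer along fst
  have haefst : ∀ {p : EuclideanSpace ℝ (Fin d) → Prop}, (∀ᵐ x ∂P, p x) → ∀ᵐ z ∂π₀, p z.1 := by
    intro p hp
    rw [← hmap] at hp
    exact ae_of_ae_map measurable_fst.aemeasurable hp
  have hfstAESM : ∀ {φ : EuclideanSpace ℝ (Fin d) → ℝ}, AEStronglyMeasurable φ P →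
      AEStronglyMeasurable (fun z : EuclideanSpace ℝ (Fin d) × EuclideanSpace ℝ (Fin d) => φ z.1) π₀ := by
    intro φ hφ
    have h : AEStronglyMeasurable φ (π₀.map Prod.fst) := by rwa [hmap]
    exact h.comp_measurable measurable_fst
  have hfst_int : ∀ {φ : EuclideanSpace ℝ (Fin d) → ℝ}, AEStronglyMeasurable φ P →
      ∫ z, φ z.1 ∂π₀ = ∫ x, φ x ∂P := by
    intro φ hφ
    conv_rhs => rw [← hmap]
    exact (integral_map measurable_fst.aemeasurable (by rwa [hmap])).symm
  have hmemfst : ∀ᵐ z ∂π₀, |gs z.1| ≤ M := haefst hgb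
  have hgsfst : AEStronglyMeasurable (fun z : EuclideanSpace ℝ (Fin d) × EuclideanSpace ℝ (Fin d) => gs z.1) π₀ :=
    hfstAESM hgsm
  -- integrability of the exponential integrand
  have hExpInt : ∀ (g : EuclideanSpace ℝ (Fin d) → ℝ) (c : ℝ),
      AEStronglyMeasurable (fun z : EuclideanSpace ℝ (Fin d) × EuclideanSpace ℝ (Fin d) => g z.1) π₀ →
      (∀ᵐ z ∂π₀, |g z.1| ≤ c) →
      Integrable (fun z => Real.exp ((F z - g z.1) / ε) - 1) π₀ := by
    intro g c hgm hgc
    have hm : AEStronglyMeasurable (fun z => Real.exp ((F z - g z.1) / ε) - 1) π₀ := by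
      have h1 : AEStronglyMeasurable (fun z => (F z - g z.1) / ε) π₀ :=
        ((hFae.aemeasurable.sub hgm.aemeasurable).div_const ε).aestronglyMeasurable
      exact (Real.continuous_exp.comp_aestronglyMeasurable h1).sub aestronglyMeasurable_const
    refine Integrable.mono' (integrable_const (Real.exp ((M + c)/ε) + 1)) hm ?_
    filter_upwards [hmemπ, hgc] with z hz hzc
    have hFz := hMF z hz
    rw [Real.norm_eq_abs]
    have h1 : Real.exp ((F z - g z.1)/ε) ≤ Real.exp ((M + c)/ε) := by
      apply Real.exp_le_exp.2
      apply (div_le_div_iff_of_pos_right hε).2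
      rw [abs_le] at hFz hzc
      linarith
    have h2 : 0 < Real.exp ((F z - g z.1)/ε) := Real.exp_pos _
    rw [abs_le]
    constructor <;> nlinarith [Real.exp_pos ((M + c)/ε)]
  have hEstarInt : Integrable (fun z => Real.exp ((F z - gs z.1) / ε) - 1) π₀ :=
    hExpInt gs M hgsfst hmemfst
  have hEstarZero : ∫ z, (Real.exp ((F z - gs z.1) / ε) - 1) ∂π₀ = 0 := by
    rw [← Measure.integral_condKernel hEstarInt, hπ₀fst]
    rw [integral_congr_ae hfibzero, integral_zero]
  have hJstar : entFunctional P π₀ F ε gs = ∫ x, gs x ∂P := by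
    rw [entFunctional, hEstarZero, mul_zero, add_zero]
  have hgsInt : Integrable gs P := by
    refine Integrable.mono' (integrable_const M) hgsm ?_
    filter_upwards [hgb] with x hx
    rwa [Real.norm_eq_abs]
  have hfirst : entFunctional P π₀ F ε gs = ε * ∫ x, Real.log (I x) ∂P := by
    rw [hJstar]
    simp only [hgs_eq]
    exact integral_const_mul ε _
  -- the functional evaluated at a bounded a.e.-measurable function
  have hkey : ∀ (g : EuclideanSpace ℝ (Fin d) → ℝ) (c : ℝ), AEStronglyMeasurable g P →
      (∀ᵐ x ∂P, |g x| ≤ c) →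
      Integrable g P ∧
      Integrable (fun x => ∫ y, (Real.exp ((F (x, y) - g x)/ε) - 1) ∂(ν x)) P ∧
      entFunctional P π₀ F ε g
        = ∫ x, (g x + ε * ∫ y, (Real.exp ((F (x, y) - g x)/ε) - 1) ∂(ν x)) ∂P ∧
      (∀ᵐ x ∂P, ∫ y, (Real.exp ((F (x, y) - g x)/ε) - 1) ∂(ν x)
        = Real.exp ((gs x - g x)/ε) - 1) := by
    intro g c hgm hgc
    have hgfst := hfstAESM hgm
    have hgcfst : ∀ᵐ z ∂π₀, |g z.1| ≤ c := haefst hgc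
    have hEint := hExpInt g c hgfst hgcfst
    have hgint : Integrable g P := by
      refine Integrable.mono' (integrable_const c) hgm ?_
      filter_upwards [hgc] with x hx
      rwa [Real.norm_eq_abs]
    have hphi : Integrable (fun x => ∫ y, (Real.exp ((F (x, y) - g x)/ε) - 1) ∂(ν x)) P := by
      have h := hEint.integral_condKernel
      rwa [hπ₀fst] at h
    refine ⟨hgint, hphi, ?_, ?_⟩
    · rw [entFunctional, ← Measure.integral_condKernel hEint, hπ₀fst,
        ← integral_const_mul, ← integral_add hgint (hphi.const_mul ε)]
    · filter_upwards [hfib] with x hx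
      obtain ⟨hint, hlo, _⟩ := hx
      have hIpos : 0 < I x := lt_of_lt_of_le (Real.exp_pos _) hlo
      have hrw : ∀ y : EuclideanSpace ℝ (Fin d), Real.exp ((F (x, y) - g x) / ε)
          = Real.exp (F (x, y) / ε) * Real.exp (-(g x) / ε) := by
        intro y
        rw [← Real.exp_add]
        congr 1
        ring
      simp_rw [hrw]
      rw [integral_sub (hint.mul_const _) (integrable_const 1), integral_mul_const,
        integral_const]
      simp only [measure_univ, ENNReal.toReal_one, smul_eq_mul, one_mul, probReal_univ]
      have hIexp : I x = Real.exp (gs x / ε) := by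
        rw [hgs_eq x, show ε * Real.log (I x) / ε = Real.log (I x) by field_simp [mul_comm],
          Real.exp_log hIpos]
      have hIg : (∫ y, Real.exp (F (x, y) / ε) ∂ν x) = I x := rfl
      rw [hIg, hIexp, ← Real.exp_add,
        show gs x / ε + -g x / ε = (gs x - g x)/ε by ring]
  -- lower bound
  have hlb : ∀ g : EuclideanSpace ℝ (Fin d) → ℝ, ContinuousOn g S →
      ∫ x, gs x ∂P ≤ entFunctional P π₀ F ε g := by
    intro g hg
    have hgm : AEStronglyMeasurable g P := by
      have h1 : AEMeasurable g (P.restrict S) := hg.aemeasurable hSm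
      rw [Measure.restrict_eq_self_of_ae_mem hmemP] at h1
      exact h1.aestronglyMeasurable
    obtain ⟨c, hc⟩ := hS.exists_bound_of_continuousOn hg
    have hgc : ∀ᵐ x ∂P, |g x| ≤ c := by
      filter_upwards [hmemP] with x hx
      exact hc x hx
    obtain ⟨hgint, hphi, hJeq, hφval⟩ := hkey g c hgm hgc
    rw [hJeq]
    refine integral_mono_ae hgsInt (hgint.add (hphi.const_mul ε)) ?_
    filter_upwards [hφval] with x hx
    rw [hx]
    have ht := Real.add_one_le_exp ((gs x - g x)/ε)
    have h2 : gs x - g x ≤ ε * (Real.exp ((gs x - g x)/ε) - 1) := by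
      have h3 := mul_le_mul_of_nonneg_left ht hε.le
      have h4 : ε * ((gs x - g x)/ε + 1) = (gs x - g x) + ε := by field_simp
      nlinarith
    linarith
  -- upper estimate for globally bounded continuous g
  have hub : ∀ g : EuclideanSpace ℝ (Fin d) → ℝ, Continuous g → (∀ x, |g x| ≤ M) →
      entFunctional P π₀ F ε g ≤ ∫ x, gs x ∂P
        + (1 + Real.exp (2*M/ε)) * ∫ x, |g x - gs x| ∂P := by
    intro g hgc hgball
    have hgm : AEStronglyMeasurable g P := hgc.aestronglyMeasurable
    have hgfst := hfstAESM hgm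
    have hEint := hExpInt g M hgfst (Eventually.of_forall fun z => hgball z.1)
    have hgint : Integrable g P := by
      refine Integrable.mono' (integrable_const M) hgm ?_
      exact Eventually.of_forall fun x => by rw [Real.norm_eq_abs]; exact hgball x
    have habs_m : AEStronglyMeasurable (fun x => |g x - gs x|) P := (hgm.sub hgsm).norm
    have habs_int : Integrable (fun x => |g x - gs x|) P := by
      refine Integrable.mono' (integrable_const (2*M)) habs_m ?_
      filter_upwards [hgb] with x hx
      rw [Real.norm_eq_abs, abs_abs]
      calc |g x - gs x| ≤ |g x| + |gs x| := abs_sub _ _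
        _ ≤ 2*M := by linarith [hgball x]
    set D := ∫ x, |g x - gs x| ∂P with hD
    have hD0 : 0 ≤ D := integral_nonneg fun x => abs_nonneg _
    -- difference of exponential terms
    have hEdiffInt : Integrable
        (fun z => Real.exp ((F z - g z.1)/ε) - Real.exp ((F z - gs z.1)/ε)) π₀ := by
      have h := hEint.sub hEstarInt
      refine h.congr (Eventually.of_forall fun z => by simp only [Pi.sub_apply]; ring)
    have hdiff : ∫ z, (Real.exp ((F z - g z.1)/ε) - 1) ∂π₀
        = ∫ z, (Real.exp ((F z - g z.1)/ε) - Real.exp ((F z - gs z.1)/ε)) ∂π₀ := by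
      calc ∫ z, (Real.exp ((F z - g z.1)/ε) - 1) ∂π₀
          = (∫ z, (Real.exp ((F z - g z.1)/ε) - 1) ∂π₀)
            - ∫ z, (Real.exp ((F z - gs z.1)/ε) - 1) ∂π₀ := by rw [hEstarZero, sub_zero]
        _ = ∫ z, ((Real.exp ((F z - g z.1)/ε) - 1) - (Real.exp ((F z - gs z.1)/ε) - 1)) ∂π₀ :=
            (integral_sub hEint hEstarInt).symm
        _ = ∫ z, (Real.exp ((F z - g z.1)/ε) - Real.exp ((F z - gs z.1)/ε)) ∂π₀ :=
            integral_congr_ae (Eventually.of_forall fun z => by ring)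
    have hfst_abs_int : Integrable
        (fun z : EuclideanSpace ℝ (Fin d) × EuclideanSpace ℝ (Fin d) =>
          (Real.exp (2*M/ε)/ε) * |g z.1 - gs z.1|) π₀ := by
      refine Integrable.mono' (integrable_const ((Real.exp (2*M/ε)/ε) * (2*M)))
        (((hgfst.sub hgsfst).norm).const_mul _) ?_
      filter_upwards [hmemfst] with z hz
      rw [Real.norm_eq_abs, abs_mul, abs_abs,
        abs_of_pos (by positivity : (0:ℝ) < Real.exp (2*M/ε)/ε)]
      have : |g z.1 - gs z.1| ≤ 2*M := by
        calc |g z.1 - gs z.1| ≤ |g z.1| + |gs z.1| := abs_sub _ _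
          _ ≤ 2*M := by linarith [hgball z.1]
      exact mul_le_mul_of_nonneg_left this (by positivity)
    have hbound : |∫ z, (Real.exp ((F z - g z.1)/ε) - Real.exp ((F z - gs z.1)/ε)) ∂π₀|
        ≤ (Real.exp (2*M/ε)/ε) * D := by
      calc |∫ z, (Real.exp ((F z - g z.1)/ε) - Real.exp ((F z - gs z.1)/ε)) ∂π₀|
          ≤ ∫ z, |Real.exp ((F z - g z.1)/ε) - Real.exp ((F z - gs z.1)/ε)| ∂π₀ := by
            have hni := norm_integral_le_integral_norm (μ := π₀)
              (f := fun z => Real.exp ((F z - g z.1)/ε) - Real.exp ((F z - gs z.1)/ε))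
            simpa [Real.norm_eq_abs] using hni
        _ ≤ ∫ z, (Real.exp (2*M/ε)/ε) * |g z.1 - gs z.1| ∂π₀ := by
            refine integral_mono_ae hEdiffInt.abs hfst_abs_int ?_
            filter_upwards [hmemπ, hmemfst] with z hz hzgs
            have hFz := hMF z hz
            rw [abs_le] at hFz hzgs
            have hgz := hgball z.1
            rw [abs_le] at hgz
            have h1 : (F z - g z.1)/ε ≤ 2*M/ε := by
              apply (div_le_div_iff_of_pos_right hε).2
              linarith
            have h2 : (F z - gs z.1)/ε ≤ 2*M/ε := by
              apply (div_le_div_iff_of_pos_right hε).2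
              linarith
            refine (exp_sub_exp_le h1 h2).trans (le_of_eq ?_)
            rw [show (F z - g z.1)/ε - (F z - gs z.1)/ε = (gs z.1 - g z.1)/ε by ring,
              abs_div, abs_of_pos hε, abs_sub_comm]
            ring
        _ = (Real.exp (2*M/ε)/ε) * ∫ z, |g z.1 - gs z.1| ∂π₀ := integral_const_mul _ _
        _ = (Real.exp (2*M/ε)/ε) * D := by rw [hfst_int habs_m]
    have hgD : ∫ x, g x ∂P ≤ ∫ x, gs x ∂P + D := by
      have h1 : ∫ x, g x ∂P - ∫ x, gs x ∂P = ∫ x, (g x - gs x) ∂P :=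
        (integral_sub hgint hgsInt).symm
      have h2 : ∫ x, (g x - gs x) ∂P ≤ D := by
        refine integral_mono_ae (hgint.sub hgsInt) habs_int ?_
        exact Eventually.of_forall fun x => le_abs_self _
      linarith
    have hfinal : ε * ∫ z, (Real.exp ((F z - g z.1)/ε) - 1) ∂π₀ ≤ Real.exp (2*M/ε) * D := by
      rw [hdiff]
      have h1 := (le_abs_self _).trans hbound
      calc ε * ∫ z, (Real.exp ((F z - g z.1)/ε) - Real.exp ((F z - gs z.1)/ε)) ∂π₀
          ≤ ε * ((Real.exp (2*M/ε)/ε) * D) := mul_le_mul_of_nonneg_left h1 hε.le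
        _ = Real.exp (2*M/ε) * D := by field_simp
    rw [entFunctional]
    have hring : (1 + Real.exp (2*M/ε)) * D = D + Real.exp (2*M/ε) * D := by ring
    linarith [hgD, hfinal, hring]
  -- approximation step
  have happrox : ∀ δ : ℝ, 0 < δ → ∃ g : EuclideanSpace ℝ (Fin d) → ℝ, Continuous g ∧
      entFunctional P π₀ F ε g ≤ (∫ x, gs x ∂P) + δ := by
    intro δ hδ
    set C := 1 + Real.exp (2*M/ε) with hC
    have hCpos : 0 < C := by positivity
    set η := δ / (2 * C) with hη
    have hηpos : 0 < η := by positivity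
    set g₀ : EuclideanSpace ℝ (Fin d) → ℝ := fun x => max (-M) (min M (hgsm.mk gs x)) with hg₀
    have hg₀m : StronglyMeasurable g₀ :=
      (measurable_const.max (measurable_const.min
        hgsm.stronglyMeasurable_mk.measurable)).stronglyMeasurable
    have hg₀b : ∀ x, |g₀ x| ≤ M := fun x => clamp_abs_le hM0
    have hg₀eq : g₀ =ᵐ[P] gs := by
      filter_upwards [hgsm.ae_eq_mk, hgb] with x h1 h2
      rw [hg₀]
      simp only
      rw [← h1, clamp_eq h2]
    have hg₀int : Integrable g₀ P := by
      refine Integrable.mono' (integrable_const M) hg₀m.aestronglyMeasurable ?_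
      exact Eventually.of_forall fun x => by rw [Real.norm_eq_abs]; exact hg₀b x
    obtain ⟨h, hsupp, hL1, hcont, hhint⟩ := hg₀int.exists_hasCompactSupport_integral_sub_le hηpos
    set gc : EuclideanSpace ℝ (Fin d) → ℝ := fun x => max (-M) (min M (h x)) with hgcdef
    have hgc_cont : Continuous gc := continuous_const.max (continuous_const.min hcont)
    have hgc_b : ∀ x, |gc x| ≤ M := fun x => clamp_abs_le hM0
    have hgc_close : ∫ x, |gc x - gs x| ∂P ≤ η := by
      have hmono : ∀ᵐ x ∂P, |gc x - gs x| ≤ ‖g₀ x - h x‖ := by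
        filter_upwards [hg₀eq] with x hx
        rw [← hx, Real.norm_eq_abs]
        calc |gc x - g₀ x| = |max (-M) (min M (h x)) - max (-M) (min M (g₀ x))| := by
              rw [clamp_eq (hg₀b x)]
          _ ≤ |h x - g₀ x| := clamp_lip M (h x) (g₀ x)
          _ = |g₀ x - h x| := abs_sub_comm _ _
      have hint1 : Integrable (fun x => |gc x - gs x|) P := by
        refine Integrable.mono' (integrable_const (2*M))
          ((hgc_cont.aestronglyMeasurable.sub hgsm).norm) ?_
        filter_upwards [hgb] with x hx
        rw [Real.norm_eq_abs, abs_abs]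
        calc |gc x - gs x| ≤ |gc x| + |gs x| := abs_sub _ _
          _ ≤ 2*M := by linarith [hgc_b x]
      calc ∫ x, |gc x - gs x| ∂P ≤ ∫ x, ‖g₀ x - h x‖ ∂P :=
            integral_mono_ae hint1 (hg₀int.sub hhint).norm hmono
        _ ≤ η := hL1
    refine ⟨gc, hgc_cont, ?_⟩
    calc entFunctional P π₀ F ε gc
        ≤ ∫ x, gs x ∂P + (1 + Real.exp (2*M/ε)) * ∫ x, |gc x - gs x| ∂P := hub gc hgc_cont hgc_b
      _ ≤ ∫ x, gs x ∂P + C * η := by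
          have h2 := mul_le_mul_of_nonneg_left hgc_close (le_of_lt hCpos)
          rw [hC] at h2 ⊢
          linarith [h2]
      _ ≤ ∫ x, gs x ∂P + δ := by
          rw [hη]
          have : C * (δ / (2*C)) = δ/2 := by field_simp
          rw [this]
          linarith
  -- conclusion
  refine ⟨hfirst, ?_⟩
  rw [hJstar]
  apply le_antisymm
  · refine le_of_forall_pos_le_add fun δ hδ => ?_
    obtain ⟨gc, hgcc, hgcJ⟩ := happrox δ hδ
    have hmem : entFunctional P π₀ F ε gc ∈ {r : ℝ | ∃ g : EuclideanSpace ℝ (Fin d) → ℝ,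
        ContinuousOn g S ∧ r = entFunctional P π₀ F ε g} := ⟨gc, hgcc.continuousOn, rfl⟩
    have hbdd : BddBelow {r : ℝ | ∃ g : EuclideanSpace ℝ (Fin d) → ℝ,
        ContinuousOn g S ∧ r = entFunctional P π₀ F ε g} := by
      refine ⟨∫ x, gs x ∂P, ?_⟩
      rintro r ⟨g, hg, rfl⟩
      exact hlb g hg
    exact (csInf_le hbdd hmem).trans hgcJ
  · refine le_csInf ⟨entFunctional P π₀ F ε (fun _ => 0), fun _ => 0, continuousOn_const, rfl⟩ ?_
    rintro r ⟨g, hg, rfl⟩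
    exact hlb g hg
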